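/- For the Pauli-4 POVM, the adjoint inverse channel satisfies (M₁⁻¹)†(P_α) = (2−√3)I + (3+√3)P_α − (3−√3)Σ_{β≠α} P_β for each Pauli matrix P_α ∈ {σ_x,σ_y,σ_z}, and (M₁⁻¹)†(I) = I, where M₁ is the measurement channel M₁(ρ) = tr(ρM₀)|0⟩⟨0| + tr(ρM₁)|+⟩⟨+| + tr(ρM₂)|l⟩⟨l| + tr(ρM₃)|t⟩⟨t|. -/

import Mathlib

open Matrix Complex
open scoped ComplexOrder

noncomputable def ket0 : Fin 2 → ℂ := ![1, 0]
noncomputable def ket1 : Fin 2 → ℂ := ![0, 1]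
noncomputable def ketP : Fin 2 → ℂ := ![(Real.sqrt 2)⁻¹, (Real.sqrt 2)⁻¹]
noncomputable def ketM : Fin 2 → ℂ := ![(Real.sqrt 2)⁻¹, -(Real.sqrt 2)⁻¹]
noncomputable def ketL : Fin 2 → ℂ := ![(Real.sqrt 2)⁻¹, Complex.I * (Real.sqrt 2)⁻¹]
noncomputable def ketR : Fin 2 → ℂ := ![(Real.sqrt 2)⁻¹, -Complex.I * (Real.sqrt 2)⁻¹]

/-- The rank-one projector |ψ⟩⟨ψ|. -/
noncomputable def proj (ψ : Fin 2 → ℂ) : Matrix (Fin 2) (Fin 2) ℂ :=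
  Matrix.vecMulVec ψ (star ψ)

noncomputable def sx : Matrix (Fin 2) (Fin 2) ℂ := !![0, 1; 1, 0]
noncomputable def sy : Matrix (Fin 2) (Fin 2) ℂ := !![0, -Complex.I; Complex.I, 0]
noncomputable def sz : Matrix (Fin 2) (Fin 2) ℂ := !![1, 0; 0, -1]

/-- The six Pauli eigenstates. -/
noncomputable def ψ6 : Fin 6 → (Fin 2 → ℂ) := ![ket0, ket1, ketP, ketM, ketL, ketR]

/-- The Pauli-6 POVM elements. -/
noncomputable def M6 (a : Fin 6) : Matrix (Fin 2) (Fin 2) ℂ := (3 : ℂ)⁻¹ • proj (ψ6 a)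

/-- The Pauli-4 POVM elements. -/
noncomputable def M4 : Fin 4 → Matrix (Fin 2) (Fin 2) ℂ :=
  ![(3 : ℂ)⁻¹ • proj ket0, (3 : ℂ)⁻¹ • proj ketP, (3 : ℂ)⁻¹ • proj ketL,
    (3 : ℂ)⁻¹ • (proj ket1 + proj ketM + proj ketR)]

/-- The projector `|t⟩⟨t|` onto the eigenvector of `M₃` with the larger
eigenvalue: the unit vector in Bloch direction `−(1,1,1)/√3`. -/
noncomputable def Tproj : Matrix (Fin 2) (Fin 2) ℂ :=
  (2 : ℂ)⁻¹ • ((1 : Matrix (Fin 2) (Fin 2) ℂ) -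
    ((Real.sqrt 3 : ℝ) : ℂ)⁻¹ • (sx + sy + sz))

/-- The Pauli-4 measurement channel. -/
noncomputable def M1chan (ρ : Matrix (Fin 2) (Fin 2) ℂ) :
    Matrix (Fin 2) (Fin 2) ℂ :=
  (ρ * M4 0).trace • proj ket0 + (ρ * M4 1).trace • proj ketP +
    (ρ * M4 2).trace • proj ketL + (ρ * M4 3).trace • Tproj

/- auxiliary lemmas -/


lemma aux_s2sq : ((Real.sqrt 2 : ℝ) : ℂ) ^ 2 = 2 := by
  norm_cast; rw [Real.sq_sqrt]; norm_num

lemma aux_s3sq : ((Real.sqrt 3 : ℝ) : ℂ) ^ 2 = 3 := by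
  norm_cast; rw [Real.sq_sqrt]; norm_num

lemma aux_i2 : (((Real.sqrt 2 : ℝ) : ℂ))⁻¹ ^ 2 = 1/2 := by
  rw [inv_pow, aux_s2sq]; norm_num

lemma aux_i2' : (((Real.sqrt 2 : ℝ) : ℂ))⁻¹ * (((Real.sqrt 2 : ℝ) : ℂ))⁻¹ = 1/2 := by
  rw [← pow_two, aux_i2]

lemma aux_s3ne : ((Real.sqrt 3 : ℝ) : ℂ) ≠ 0 := by
  simp [Real.sqrt_eq_zero']

lemma aux_i3 : (((Real.sqrt 3 : ℝ) : ℂ))⁻¹ = ((Real.sqrt 3 : ℝ) : ℂ) / 3 := by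
  rw [eq_div_iff (by norm_num : (3:ℂ) ≠ 0)]
  field_simp
  rw [← aux_s3sq]

lemma aux_proj0 : proj ket0 = !![1,0;0,0] := by
  ext i j
  fin_cases i <;> fin_cases j <;> simp [proj, ket0, vecMulVec_apply]

lemma aux_proj1 : proj ket1 = !![0,0;0,1] := by
  ext i j
  fin_cases i <;> fin_cases j <;> simp [proj, ket1, vecMulVec_apply]

lemma aux_projP : proj ketP = !![1/2,1/2;1/2,1/2] := by
  ext i j
  fin_cases i <;> fin_cases j <;>
    simp [proj, ketP, vecMulVec_apply, aux_i2']

lemma aux_projM : proj ketM = !![1/2,-(1/2);-(1/2),1/2] := by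
  ext i j
  fin_cases i <;> fin_cases j <;>
    simp [proj, ketM, vecMulVec_apply, aux_i2'] <;> ring_nf <;>
    simp only [aux_i2, aux_s2sq] <;> ring

lemma aux_projL : proj ketL = !![1/2, -Complex.I/2; Complex.I/2, 1/2] := by
  ext i j
  fin_cases i <;> fin_cases j <;>
    simp [proj, ketL, vecMulVec_apply] <;> ring_nf <;>
    simp only [aux_i2, aux_s2sq, Complex.I_sq] <;> ring

lemma aux_projR : proj ketR = !![1/2, Complex.I/2; -Complex.I/2, 1/2] := by
  ext i j
  fin_cases i <;> fin_cases j <;>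
    simp [proj, ketR, vecMulVec_apply] <;> ring_nf <;>
    simp only [aux_i2, aux_s2sq, Complex.I_sq] <;> ring

lemma aux_T : Tproj = !![1/2 - ((Real.sqrt 3 : ℝ) : ℂ)/6,
      -(((Real.sqrt 3 : ℝ) : ℂ)/6) * (1 - Complex.I);
      -(((Real.sqrt 3 : ℝ) : ℂ)/6) * (1 + Complex.I),
      1/2 + ((Real.sqrt 3 : ℝ) : ℂ)/6] := by
  ext i j
  fin_cases i <;> fin_cases j <;>
    simp [Tproj, sx, sy, sz, Matrix.smul_apply, Matrix.sub_apply, Matrix.add_apply,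
      Matrix.one_apply, aux_i3] <;> ring

lemma aux_I3 : Complex.I ^ 3 = -Complex.I := by
  rw [pow_succ, Complex.I_sq]; ring

lemma aux_star_mul_self (z : ℂ) : star z * z = (Complex.normSq z : ℂ) := by
  rw [Complex.star_def, mul_comm, Complex.mul_conj]

lemma aux_hs (D : Matrix (Fin 2) (Fin 2) ℂ) (h : (Dᴴ * D).trace = 0) : D = 0 := by
  simp only [Matrix.trace, Matrix.diag, Matrix.mul_apply, Matrix.conjTranspose_apply,
    Fin.sum_univ_two, aux_star_mul_self] at h
  norm_cast at h
  have h00 := Complex.normSq_nonneg (D 0 0)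
  have h01 := Complex.normSq_nonneg (D 0 1)
  have h10 := Complex.normSq_nonneg (D 1 0)
  have h11 := Complex.normSq_nonneg (D 1 1)
  ext i j
  fin_cases i <;> fin_cases j <;> refine Complex.normSq_eq_zero.mp ?_ <;>
    simp only [Fin.mk_zero, Fin.mk_one, Fin.isValue] <;> linarith

set_option maxHeartbeats 2000000

/-- For the Pauli-4 POVM, the adjoint of the inverse measurement channel
satisfies `(M₁⁻¹)†(P_α) = (2−√3)I + (3+√3)P_α − (3−√3)Σ_{β≠α} P_β` for each
Pauli matrix, and `(M₁⁻¹)†(I) = I`. -/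
theorem pauli4_adjoint_inverse_channel
    (Minv Madj : Matrix (Fin 2) (Fin 2) ℂ →ₗ[ℂ] Matrix (Fin 2) (Fin 2) ℂ)
    (hinv₁ : ∀ X, Minv (M1chan X) = X)
    (hinv₂ : ∀ X, M1chan (Minv X) = X)
    (hadj : ∀ A B : Matrix (Fin 2) (Fin 2) ℂ,
      ((Madj A)ᴴ * B).trace = (Aᴴ * Minv B).trace) :
    (Madj sx = ((2 - Real.sqrt 3 : ℝ) : ℂ) • 1 +
        ((3 + Real.sqrt 3 : ℝ) : ℂ) • sx - ((3 - Real.sqrt 3 : ℝ) : ℂ) • (sy + sz)) ∧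
    (Madj sy = ((2 - Real.sqrt 3 : ℝ) : ℂ) • 1 +
        ((3 + Real.sqrt 3 : ℝ) : ℂ) • sy - ((3 - Real.sqrt 3 : ℝ) : ℂ) • (sx + sz)) ∧
    (Madj sz = ((2 - Real.sqrt 3 : ℝ) : ℂ) • 1 +
        ((3 + Real.sqrt 3 : ℝ) : ℂ) • sz - ((3 - Real.sqrt 3 : ℝ) : ℂ) • (sx + sy)) ∧
    Madj 1 = 1 := by
  have key : ∀ A C : Matrix (Fin 2) (Fin 2) ℂ,
      (∀ X, (Cᴴ * M1chan X).trace = (Aᴴ * X).trace) → Madj A = C := by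
    intro A C hC
    have hz : ∀ B, (((Madj A - C)ᴴ) * B).trace = 0 := by
      intro B
      have h1 := hadj A B
      have h2 := hC (Minv B)
      rw [hinv₂ B] at h2
      rw [Matrix.conjTranspose_sub, Matrix.sub_mul, Matrix.trace_sub, h1, h2, sub_self]
    exact sub_eq_zero.mp (aux_hs _ (hz _))
  refine ⟨key _ _ ?_, key _ _ ?_, key _ _ ?_, key _ _ ?_⟩ <;>
  · intro X
    rw [M1chan]
    simp only [M4, Matrix.cons_val_zero, Matrix.cons_val_one, Matrix.head_cons,
      Matrix.cons_val_two, Matrix.cons_val_three, Matrix.tail_cons,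
      aux_proj0, aux_proj1, aux_projP, aux_projM, aux_projL, aux_projR, aux_T,
      sx, sy, sz]
    push_cast
    simp only [Matrix.trace, Matrix.diag, Matrix.mul_apply, Matrix.conjTranspose_apply,
      Fin.sum_univ_two, Matrix.smul_apply, Matrix.add_apply, Matrix.sub_apply,
      Matrix.one_apply, Matrix.cons_val', Matrix.cons_val_zero, Matrix.cons_val_one,
      Matrix.head_cons, Matrix.head_fin_const, Matrix.empty_val',
      Matrix.cons_val_fin_one, smul_eq_mul, Complex.star_def, map_add, map_sub, _root_.map_mul,
      _root_.map_one, map_ofNat, Complex.conj_ofReal, Complex.conj_I, map_div₀, star_zero,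
      star_one, star_neg, if_true, if_false]
    norm_num
    all_goals try ring_nf
    all_goals try simp only [aux_s3sq, Complex.I_sq, aux_I3]
    all_goals ring
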